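/- Let f : ℤ → [0,1] be a monotone log-concave probability mass function (non-increasing on its support, which may be taken to be contained in ℤ₊ = {0,1,2,...}). Then max_{k∈ℤ} (f ⋆ f)(k) > e^{-1} · max_{k∈ℤ} f(k), where (f ⋆ f)(k) = Σ_{j∈ℤ} f(j) f(k-j). Equivalently, for i.i.d. integer-valued random variables X, Y with pmf f, H_∞(X+Y) < H_∞(X) + 1. -/

import Mathlib

open Real

/-- Key analytic fact: for `ρ ∈ (0,1)` there is an integer `k` with
`(k+1)(1-ρ)ρ^k > e⁻¹`. -/
lemma discrete_hinf_lemA (ρ : ℝ) (hρ0 : 0 < ρ) (hρ1 : ρ < 1) :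
    ∃ k : ℕ, Real.exp (-1) < ((k : ℝ) + 1) * ((1 - ρ) * ρ ^ k) := by
  set t : ℝ := -Real.log ρ with ht_def
  have ht : 0 < t := by
    have := Real.log_neg hρ0 hρ1
    simp only [ht_def]
    linarith
  set K : ℕ := ⌈1 / t⌉₊ with hK_def
  have hKpos : 0 < K := Nat.ceil_pos.mpr (by positivity)
  obtain ⟨k, hk⟩ : ∃ k, K = k + 1 := ⟨K - 1, by omega⟩
  refine ⟨k, ?_⟩
  have hceil_ge : (1 : ℝ) / t ≤ (K : ℝ) := Nat.le_ceil _
  have hceil_lt : (K : ℝ) < 1 / t + 1 := Nat.ceil_lt_add_one (by positivity)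
  have hKk : (K : ℝ) = (k : ℝ) + 1 := by rw [hk]; push_cast; ring
  set s : ℝ := t * K - 1 with hs_def
  have hs0 : 0 ≤ s := by
    have h := mul_le_mul_of_nonneg_left hceil_ge ht.le
    rw [mul_one_div, div_self ht.ne'] at h
    simp only [hs_def]; linarith
  have hst : s < t := by
    have h := mul_lt_mul_of_pos_left hceil_lt ht
    have h2 : t * (1 / t + 1) = 1 + t := by field_simp
    simp only [hs_def]; nlinarith
  have h1s : (0 : ℝ) < 1 + s := by linarith
  have h1t : (0 : ℝ) < 1 + t := by linarith
  have hρk : (0 : ℝ) < ρ ^ k := pow_pos hρ0 k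
  have h1ρ : (0 : ℝ) < 1 - ρ := by linarith
  have hKr : ((k : ℝ) + 1) = (1 + s) / t := by
    rw [← hKk, hs_def]
    field_simp
    ring
  have hlogK : Real.log ((k : ℝ) + 1) = Real.log (1 + s) - Real.log t := by
    rw [hKr, Real.log_div h1s.ne' ht.ne']
  have hkt : (k : ℝ) * t = s + 1 - t := by
    have : s = t * ((k : ℝ) + 1) - 1 := by rw [hs_def, hKk]
    nlinarith [this]
  have hlogρk : Real.log (ρ ^ k) = -((k : ℝ) * t) := by
    rw [Real.log_pow, ht_def]
    ring
  have fact1 : Real.log (1 + t) - Real.log (1 + s) < t - s := by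
    have hx : (0 : ℝ) < (1 + t) / (1 + s) := by positivity
    have hgt : (1 : ℝ) < (1 + t) / (1 + s) := (one_lt_div h1s).mpr (by linarith)
    have h := Real.log_lt_sub_one_of_pos hx (ne_of_gt hgt)
    rw [Real.log_div h1t.ne' h1s.ne'] at h
    have h2 : (1 + t) / (1 + s) - 1 = (t - s) / (1 + s) := by field_simp; ring
    have h3 : (t - s) / (1 + s) ≤ t - s := div_le_self (by linarith) (by linarith)
    linarith
  have fact2 : Real.log t ≤ Real.log (1 + t) + Real.log (1 - ρ) := by
    rw [← Real.log_mul h1t.ne' h1ρ.ne']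
    apply Real.log_le_log ht
    have hinv : t ≤ ρ⁻¹ - 1 := by
      have h := Real.log_le_sub_one_of_pos (inv_pos.mpr hρ0)
      rw [Real.log_inv] at h
      simp only [ht_def]; linarith
    have hρinv : ρ * ρ⁻¹ = 1 := mul_inv_cancel₀ hρ0.ne'
    nlinarith
  have hpos : (0 : ℝ) < ((k : ℝ) + 1) * ((1 - ρ) * ρ ^ k) := by positivity
  rw [show ((k : ℝ) + 1) * ((1 - ρ) * ρ ^ k)
      = Real.exp (Real.log (((k : ℝ) + 1) * ((1 - ρ) * ρ ^ k))) from (Real.exp_log hpos).symm]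
  apply Real.exp_lt_exp.mpr
  rw [Real.log_mul (by positivity) (by positivity), Real.log_mul h1ρ.ne' hρk.ne',
    hlogK, hlogρk, hkt]
  linarith

/-- Cross inequality for log-concave non-increasing sequences:
`p (j+1) * p i ≤ p j * p (i+1)` in the form with `j = i + d`. -/
lemma discrete_hinf_cross (p : ℕ → ℝ) (h0 : ∀ n, 0 ≤ p n) (hm : ∀ n, p (n + 1) ≤ p n)
    (hlc : ∀ n, p n * p (n + 2) ≤ p (n + 1) ^ 2) :
    ∀ (d i : ℕ), p (i + d + 1) * p i ≤ p (i + d) * p (i + 1) := by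
  intro d
  induction d with
  | zero => intro i; exact le_of_eq (mul_comm _ _)
  | succ d ih =>
    intro i
    show p (i + d + 2) * p i ≤ p (i + d + 1) * p (i + 1)
    by_cases hz : p (i + d + 1) = 0
    · have h2 : p (i + d + 2) = 0 := le_antisymm (hz ▸ hm (i + d + 1)) (h0 _)
      rw [h2, zero_mul]
      exact mul_nonneg (h0 _) (h0 _)
    · have hpos : 0 < p (i + d + 1) := (h0 _).lt_of_ne (Ne.symm hz)
      have hpos' : 0 < p (i + d) := lt_of_lt_of_le hpos (hm _)
      have H := hlc (i + d)
      have IH := ih i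
      have key : (p (i + d + 2) * p i) * (p (i + d) * p (i + d + 1))
          ≤ (p (i + d + 1) * p (i + 1)) * (p (i + d) * p (i + d + 1)) := by
        calc (p (i + d + 2) * p i) * (p (i + d) * p (i + d + 1))
            = (p (i + d) * p (i + d + 2)) * (p (i + d + 1) * p i) := by ring
          _ ≤ (p (i + d + 1) ^ 2) * (p (i + d) * p (i + 1)) :=
              mul_le_mul H IH (mul_nonneg (h0 _) (h0 _)) (sq_nonneg _)
          _ = (p (i + d + 1) * p (i + 1)) * (p (i + d) * p (i + d + 1)) := by ring
      exact le_of_mul_le_mul_right key (mul_pos hpos' hpos)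

/-- Pairing inequality: `p 0 * p (i+j) ≤ p i * p j` for log-concave non-increasing `p`. -/
lemma discrete_hinf_pairing (p : ℕ → ℝ) (h0 : ∀ n, 0 ≤ p n) (hm : ∀ n, p (n + 1) ≤ p n)
    (hlc : ∀ n, p n * p (n + 2) ≤ p (n + 1) ^ 2) :
    ∀ i j : ℕ, p 0 * p (i + j) ≤ p i * p j := by
  have main : ∀ i j, i ≤ j → p 0 * p (i + j) ≤ p i * p j := by
    intro i
    induction i with
    | zero => intro j _; simp
    | succ i ih =>
      intro j hij
      have h1 : p 0 * p (i + (j + 1)) ≤ p i * p (j + 1) := ih (j + 1) (by omega)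
      have h2 : p (j + 1) * p i ≤ p j * p (i + 1) := by
        obtain ⟨d, rfl⟩ : ∃ d, i + d = j := ⟨j - i, by omega⟩
        exact discrete_hinf_cross p h0 hm hlc d i
      calc p 0 * p (i + 1 + j) = p 0 * p (i + (j + 1)) := by rw [show i + 1 + j = i + (j + 1) by omega]
        _ ≤ p i * p (j + 1) := h1
        _ = p (j + 1) * p i := mul_comm _ _
        _ ≤ p j * p (i + 1) := h2
        _ = p (i + 1) * p j := mul_comm _ _
  intro i j
  rcases le_total i j with h | h
  · exact main i j h
  · rw [show i + j = j + i by omega]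
    exact (main j i h).trans (le_of_eq (mul_comm _ _))

set_option maxHeartbeats 1600000 in
/-- For a monotone (non-increasing, supported on `ℤ₊`) log-concave pmf `f` on `ℤ`:
`max_k (f ⋆ f)(k) > e⁻¹ · max_k f(k)`, i.e. `H_∞(X+Y) < H_∞(X) + 1`
for i.i.d. `X, Y` with pmf `f`. -/
theorem discrete_hinf_reverse_epi (f : ℤ → ℝ)
    (h0 : ∀ k, 0 ≤ f k) (h1 : ∀ k, f k ≤ 1) (hsum : ∑' k : ℤ, f k = 1)
    (hsupp : ∀ k : ℤ, k < 0 → f k = 0)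
    (hmono : ∀ k : ℤ, 0 ≤ k → f (k + 1) ≤ f k)
    (hlc : ∀ k : ℤ, f k * f (k + 2) ≤ f (k + 1) ^ 2) :
    Real.exp (-1) * (⨆ k : ℤ, f k) < ⨆ k : ℤ, ∑' j : ℤ, f j * f (k - j) := by
  classical
  by_contra hcon
  push_neg at hcon
  set p : ℕ → ℝ := fun n => f (n : ℤ) with hpdef
  have hp0 : ∀ n, 0 ≤ p n := fun n => h0 _
  have hpm : ∀ n : ℕ, p (n + 1) ≤ p n := by
    intro n
    have h := hmono (n : ℤ) (Int.natCast_nonneg n)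
    have hc : ((n : ℤ) + 1) = ((n + 1 : ℕ) : ℤ) := by push_cast; ring
    rw [hc] at h
    exact h
  have hplc : ∀ n : ℕ, p n * p (n + 2) ≤ p (n + 1) ^ 2 := by
    intro n
    have h := hlc (n : ℤ)
    have hc1 : ((n : ℤ) + 1) = ((n + 1 : ℕ) : ℤ) := by push_cast; ring
    have hc2 : ((n : ℤ) + 2) = ((n + 2 : ℕ) : ℤ) := by push_cast; ring
    rw [hc1, hc2] at h
    exact h
  have hanti : ∀ i j : ℕ, i ≤ j → p j ≤ p i := by
    intro i j hij
    obtain ⟨d, rfl⟩ : ∃ d, i + d = j := ⟨j - i, by omega⟩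
    clear hij
    induction d with
    | zero => exact le_rfl
    | succ d ih => exact le_trans (hpm (i + d)) ih
  have hfle : ∀ k : ℤ, f k ≤ f 0 := by
    intro k
    rcases lt_or_ge k 0 with h | h
    · rw [hsupp k h]; exact h0 0
    · obtain ⟨n, rfl⟩ : ∃ n : ℕ, (n : ℤ) = k := ⟨k.toNat, Int.toNat_of_nonneg h⟩
      exact hanti 0 n (Nat.zero_le n)
  have hSf : Summable f := by
    by_contra hS
    rw [tsum_eq_zero_of_not_summable hS] at hsum
    norm_num at hsum
  have hvan : ∀ x : ℤ, x ∉ Set.range ((↑) : ℕ → ℤ) → f x = 0 := by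
    intro x hx
    apply hsupp
    by_contra hlt
    push_neg at hlt
    exact hx ⟨x.toNat, Int.toNat_of_nonneg hlt⟩
  have hhs : HasSum f 1 := hsum ▸ hSf.hasSum
  have hps : HasSum p 1 := (Function.Injective.hasSum_iff (Nat.cast_injective : Function.Injective ((↑) : ℕ → ℤ)) hvan).mpr hhs
  have hSp : Summable p := hps.summable
  have htsump : ∑' n, p n = 1 := hps.tsum_eq
  have hp0pos : 0 < p 0 := by
    rcases (hp0 0).eq_or_lt with h | h
    · exfalso
      have hz : ∀ n, p n = 0 := fun n => le_antisymm (h ▸ hanti 0 n (Nat.zero_le n)) (hp0 n)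
      have : (1 : ℝ) = 0 := by rw [← htsump]; simp [hz]
      norm_num at this
    · exact h
  -- the supremum of f is f 0
  have hbddf : BddAbove (Set.range f) := ⟨f 0, by rintro _ ⟨k, rfl⟩; exact hfle k⟩
  have hsupf : (⨆ k : ℤ, f k) = f 0 := le_antisymm (ciSup_le hfle) (le_ciSup hbddf 0)
  rw [hsupf] at hcon
  -- convolution bounds
  have hSconv : ∀ k : ℤ, Summable (fun j => f j * f (k - j)) := by
    intro k
    apply Summable.of_nonneg_of_le (fun j => mul_nonneg (h0 _) (h0 _)) (fun j => ?_) hSf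
    calc f j * f (k - j) ≤ f j * 1 := mul_le_mul_of_nonneg_left (h1 _) (h0 j)
      _ = f j := mul_one _
  have hconv_le : ∀ k : ℤ, (∑' j, f j * f (k - j)) ≤ 1 := by
    intro k
    calc (∑' j, f j * f (k - j)) ≤ ∑' j, f j := by
          apply Summable.tsum_le_tsum (fun j => ?_) (hSconv k) hSf
          calc f j * f (k - j) ≤ f j * 1 := mul_le_mul_of_nonneg_left (h1 _) (h0 j)
            _ = f j := mul_one _
      _ = 1 := hsum
  have hbddg : BddAbove (Set.range fun k : ℤ => ∑' j, f j * f (k - j)) :=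
    ⟨1, by rintro _ ⟨k, rfl⟩; exact hconv_le k⟩
  have hgle : ∀ k : ℤ, (∑' j : ℤ, f j * f (k - j)) ≤ Real.exp (-1) * f 0 :=
    fun k => le_trans (le_ciSup hbddg k) hcon
  have hpair := discrete_hinf_pairing p hp0 hpm hplc
  -- the key pointwise bound : (n+1) p n ≤ exp (-1)
  have hkey : ∀ n : ℕ, ((n : ℝ) + 1) * p n ≤ Real.exp (-1) := by
    intro n
    have hlow : ((n : ℝ) + 1) * (p 0 * p n) ≤ ∑' j : ℤ, f j * f ((n : ℤ) - j) := by
      have hfin := Summable.sum_le_tsum ((Finset.range (n + 1)).map ⟨fun i : ℕ => (i : ℤ), (Nat.cast_injective : Function.Injective ((↑) : ℕ → ℤ))⟩)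
        (fun j _ => mul_nonneg (h0 _) (h0 _)) (hSconv (n : ℤ))
      rw [Finset.sum_map] at hfin
      simp only [Function.Embedding.coeFn_mk] at hfin
      refine le_trans ?_ hfin
      have hterm : ∀ i ∈ Finset.range (n + 1), p 0 * p n ≤ f (i : ℤ) * f ((n : ℤ) - (i : ℤ)) := by
        intro i hi
        have hin : i ≤ n := Nat.lt_succ_iff.mp (Finset.mem_range.mp hi)
        have hcast : ((n : ℤ) - (i : ℤ)) = ((n - i : ℕ) : ℤ) := by rw [Nat.cast_sub hin]
        rw [hcast]
        have h := hpair i (n - i)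
        rw [Nat.add_sub_cancel' hin] at h
        exact h
      calc ((n : ℝ) + 1) * (p 0 * p n) = ∑ _i ∈ Finset.range (n + 1), (p 0 * p n) := by
            rw [Finset.sum_const, Finset.card_range, nsmul_eq_mul]; push_cast; ring
        _ ≤ ∑ i ∈ Finset.range (n + 1), f (i : ℤ) * f ((n : ℤ) - (i : ℤ)) :=
            Finset.sum_le_sum hterm
    have h1' := hlow.trans (hgle (n : ℤ))
    have h2 : (((n : ℝ) + 1) * p n) * p 0 ≤ Real.exp (-1) * p 0 := by
      have hf0 : f (0 : ℤ) = p 0 := by simp [hpdef]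
      calc (((n : ℝ) + 1) * p n) * p 0 = ((n : ℝ) + 1) * (p 0 * p n) := by ring
        _ ≤ Real.exp (-1) * f 0 := h1'
        _ = Real.exp (-1) * p 0 := by rw [hf0]
    exact le_of_mul_le_mul_right h2 hp0pos
  -- existence of the "turning point" m
  have hex : ∃ m : ℕ, ((m : ℝ) + 2) * p (m + 1) ≤ ((m : ℝ) + 1) * p m := by
    by_contra hno
    push_neg at hno
    have hgrow : ∀ n : ℕ, p 0 ≤ ((n : ℝ) + 1) * p n := by
      intro n
      induction n with
      | zero => simp
      | succ n ih =>
        have h := hno n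
        push_cast
        linarith
    have hs1 : Summable (fun n : ℕ => p 0 * ((n : ℝ) + 1)⁻¹) := by
      apply Summable.of_nonneg_of_le (fun n => by positivity) (fun n => ?_) hSp
      have hn1 : (0 : ℝ) < (n : ℝ) + 1 := by positivity
      calc p 0 * ((n : ℝ) + 1)⁻¹ ≤ (((n : ℝ) + 1) * p n) * ((n : ℝ) + 1)⁻¹ :=
            mul_le_mul_of_nonneg_right (hgrow n) (by positivity)
        _ = p n := by field_simp
    have hs2 : Summable (fun n : ℕ => ((n : ℝ) + 1)⁻¹) :=
      (summable_mul_left_iff hp0pos.ne').mp hs1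
    have hs3 : Summable (fun n : ℕ => 1 / (n : ℝ)) := by
      apply (summable_nat_add_iff 1).mp
      have he : (fun n : ℕ => 1 / ((n + 1 : ℕ) : ℝ)) = fun n : ℕ => ((n : ℝ) + 1)⁻¹ := by
        funext n; push_cast; rw [one_div]
      rw [he]
      exact hs2
    exact Real.not_summable_one_div_natCast hs3
  obtain ⟨m, hPm, hmin⟩ :
      ∃ m : ℕ, (((m : ℝ) + 2) * p (m + 1) ≤ ((m : ℝ) + 1) * p m) ∧
        ∀ l, l < m → ((l : ℝ) + 1) * p l < ((l : ℝ) + 2) * p (l + 1) :=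
    ⟨Nat.find hex, Nat.find_spec hex, fun l hl => not_le.mp (Nat.find_min hex hl)⟩
  have hgrow' : ∀ l, l ≤ m → p 0 ≤ ((l : ℝ) + 1) * p l := by
    intro l
    induction l with
    | zero => intro _; simp
    | succ l ih =>
      intro hl
      have h1 := ih (by omega)
      have h2 := hmin l (by omega)
      push_cast
      linarith
  have hpm_pos : 0 < p m := by
    have h := hgrow' m le_rfl
    have hm1 : (0 : ℝ) < (m : ℝ) + 1 := by positivity
    nlinarith
  set q : ℝ := p (m + 1) / p m with hq_def
  have hq0 : 0 ≤ q := div_nonneg (hp0 _) hpm_pos.le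
  set ρ : ℝ := max q ((m : ℝ) / ((m : ℝ) + 1)) with hρ_def
  have hρ0 : 0 ≤ ρ := le_trans hq0 (le_max_left _ _)
  have hqub : q ≤ ((m : ℝ) + 1) / ((m : ℝ) + 2) := by
    rw [hq_def, div_le_div_iff₀ hpm_pos (by positivity)]
    nlinarith [hPm]
  have hρub : ρ ≤ ((m : ℝ) + 1) / ((m : ℝ) + 2) := by
    apply max_le hqub
    rw [div_le_div_iff₀ (by positivity) (by positivity)]
    nlinarith [Nat.cast_nonneg (α := ℝ) m]
  have hρ1 : ρ < 1 := lt_of_le_of_lt hρub (by rw [div_lt_one (by positivity)]; linarith)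
  have hqm : p (m + 1) ≤ ρ * p m := by
    have hd : q * p m = p (m + 1) := div_mul_cancel₀ _ hpm_pos.ne'
    calc p (m + 1) = q * p m := hd.symm
      _ ≤ ρ * p m := mul_le_mul_of_nonneg_right (le_max_left _ _) hpm_pos.le
  have hcross : ∀ i j : ℕ, i ≤ j → p (j + 1) * p i ≤ p j * p (i + 1) := by
    intro i j hij
    obtain ⟨d, rfl⟩ : ∃ d, i + d = j := ⟨j - i, by omega⟩
    exact discrete_hinf_cross p hp0 hpm hplc d i
  have hstep_up : ∀ k, m ≤ k → p (k + 1) ≤ ρ * p k := by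
    intro k hk
    have h1 := hcross m k hk
    have h2 : p k * p (m + 1) ≤ p k * (ρ * p m) := mul_le_mul_of_nonneg_left hqm (hp0 k)
    have h3 : p (k + 1) * p m ≤ (ρ * p k) * p m := by
      calc p (k + 1) * p m ≤ p k * p (m + 1) := h1
        _ ≤ p k * (ρ * p m) := h2
        _ = (ρ * p k) * p m := by ring
    exact le_of_mul_le_mul_right h3 hpm_pos
  have hstep_dn : ∀ l, l < m → ρ * p l ≤ p (l + 1) := by
    intro l hl
    rw [hρ_def, max_mul_of_nonneg _ _ (hp0 l)]
    apply max_le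
    · rw [hq_def, div_mul_eq_mul_div, div_le_iff₀ hpm_pos]
      have h := hcross l m hl.le
      nlinarith [h]
    · obtain ⟨m', rfl⟩ : ∃ m', m = m' + 1 := ⟨m - 1, by omega⟩
      have h1 := hcross l m' (by omega)
      have h2 := hmin m' (by omega)
      have hpm1pos : 0 < p (m' + 1) := hpm_pos
      have key : p (m' + 1) * ((((m' + 1 : ℕ) : ℝ)) * p l)
          ≤ p (m' + 1) * ((((m' + 1 : ℕ) : ℝ) + 1) * p (l + 1)) := by
        push_cast
        nlinarith [mul_le_mul_of_nonneg_left h1 (show (0 : ℝ) ≤ (m' : ℝ) + 1 by positivity),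
          mul_le_mul_of_nonneg_right h2.le (hp0 (l + 1))]
      have key2 : (((m' + 1 : ℕ) : ℝ)) * p l ≤ (((m' + 1 : ℕ) : ℝ) + 1) * p (l + 1) :=
        le_of_mul_le_mul_left key hpm1pos
      rw [div_mul_eq_mul_div, div_le_iff₀ (by positivity)]
      push_cast at key2 ⊢
      nlinarith [key2]
  -- geometric domination
  have hup_p : ∀ d, p (m + d) ≤ p m * ρ ^ d := by
    intro d
    induction d with
    | zero => simp
    | succ d ih =>
      have h1 := hstep_up (m + d) (by omega)
      calc p (m + (d + 1)) = p (m + d + 1) := by rw [show m + (d + 1) = m + d + 1 from rfl]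
        _ ≤ ρ * p (m + d) := h1
        _ ≤ ρ * (p m * ρ ^ d) := mul_le_mul_of_nonneg_left ih hρ0
        _ = p m * ρ ^ (d + 1) := by ring
  have hdn_p : ∀ d j, j + d = m → p j * ρ ^ d ≤ p m := by
    intro d
    induction d with
    | zero =>
      intro j h
      obtain rfl : j = m := by omega
      simp
    | succ d ih =>
      intro j h
      have h1 := hstep_dn j (by omega)
      have h2 := ih (j + 1) (by omega)
      calc p j * ρ ^ (d + 1) = (ρ * p j) * ρ ^ d := by ring
        _ ≤ p (j + 1) * ρ ^ d := mul_le_mul_of_nonneg_right h1 (pow_nonneg hρ0 d)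
        _ ≤ p m := h2
  have hdn_w : ∀ d j, j + d = m → ((j : ℝ) + 1) * ρ ^ j ≤ ((m : ℝ) + 1) * ρ ^ m := by
    intro d
    induction d with
    | zero =>
      intro j h
      obtain rfl : j = m := by omega
      exact le_rfl
    | succ d ih =>
      intro j h
      have h2 := ih (j + 1) (by omega)
      have hρlb : ((j : ℝ) + 1) / ((j : ℝ) + 2) ≤ ρ := by
        refine le_trans ?_ (le_max_right q ((m : ℝ) / ((m : ℝ) + 1)))
        have hj1m : (j : ℝ) + 1 ≤ (m : ℝ) := by
          have : j + 1 ≤ m := by omega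
          exact_mod_cast this
        rw [div_le_div_iff₀ (by positivity) (by positivity)]
        nlinarith
      have hstep : ((j : ℝ) + 1) * ρ ^ j ≤ ((j : ℝ) + 2) * ρ ^ (j + 1) := by
        rw [div_le_iff₀ (by positivity)] at hρlb
        have h5 : ((j : ℝ) + 1) ≤ ((j : ℝ) + 2) * ρ := by nlinarith [hρlb]
        calc ((j : ℝ) + 1) * ρ ^ j ≤ (((j : ℝ) + 2) * ρ) * ρ ^ j :=
              mul_le_mul_of_nonneg_right h5 (pow_nonneg hρ0 j)
          _ = ((j : ℝ) + 2) * ρ ^ (j + 1) := by ring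
      refine hstep.trans ?_
      have hc : (((j + 1 : ℕ) : ℝ) + 1) = (j : ℝ) + 2 := by push_cast; ring
      rw [hc] at h2
      exact h2
  have hup_w : ∀ d, (((m + d : ℕ) : ℝ) + 1) * ρ ^ (m + d) ≤ ((m : ℝ) + 1) * ρ ^ m := by
    intro d
    induction d with
    | zero => simp
    | succ d ih =>
      have hρub2 : ρ ≤ ((m : ℝ) + (d : ℝ) + 1) / ((m : ℝ) + (d : ℝ) + 2) := by
        refine hρub.trans ?_
        rw [div_le_div_iff₀ (by positivity) (by positivity)]
        nlinarith [Nat.cast_nonneg (α := ℝ) d, Nat.cast_nonneg (α := ℝ) m]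
      have h1 : (((m : ℝ) + (d : ℝ)) + 2) * ρ ≤ ((m : ℝ) + (d : ℝ)) + 1 := by
        rw [le_div_iff₀ (by positivity)] at hρub2
        nlinarith [hρub2]
      have hstep : (((m + d : ℕ) : ℝ) + 2) * ρ ^ (m + d + 1) ≤ (((m + d : ℕ) : ℝ) + 1) * ρ ^ (m + d) := by
        push_cast
        calc ((m : ℝ) + (d : ℝ) + 2) * ρ ^ (m + d + 1)
            = (((m : ℝ) + (d : ℝ) + 2) * ρ) * ρ ^ (m + d) := by ring
          _ ≤ ((m : ℝ) + (d : ℝ) + 1) * ρ ^ (m + d) :=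
              mul_le_mul_of_nonneg_right h1 (pow_nonneg hρ0 _)
      calc (((m + (d + 1) : ℕ) : ℝ) + 1) * ρ ^ (m + (d + 1))
          = (((m + d : ℕ) : ℝ) + 2) * ρ ^ (m + d + 1) := by push_cast; ring_nf
        _ ≤ (((m + d : ℕ) : ℝ) + 1) * ρ ^ (m + d) := hstep
        _ ≤ ((m : ℝ) + 1) * ρ ^ m := ih
  have hL9 : ∀ k : ℕ, ((k : ℝ) + 1) * ρ ^ k ≤ ((m : ℝ) + 1) * ρ ^ m := by
    intro k
    rcases le_or_gt k m with h | h
    · exact hdn_w (m - k) k (by omega)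
    · obtain ⟨d, rfl⟩ : ∃ d, k = m + d := ⟨k - m, by omega⟩
      have := hup_w d
      push_cast at this ⊢
      linarith
  -- split on ρ = 0
  rcases hρ0.lt_or_eq with hρpos | hρzero
  · -- main case
    have hA : ∀ k : ℕ, p k ≤ (p m / ρ ^ m) * ρ ^ k := by
      intro k
      rcases le_or_gt k m with h | h
      · obtain ⟨d, hd⟩ : ∃ d, k + d = m := ⟨m - k, by omega⟩
        have h1 := hdn_p d k hd
        rw [div_mul_eq_mul_div, le_div_iff₀ (pow_pos hρpos m)]
        calc p k * ρ ^ m = (p k * ρ ^ d) * ρ ^ k := by rw [← hd, pow_add]; ring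
          _ ≤ p m * ρ ^ k := mul_le_mul_of_nonneg_right h1 (pow_nonneg hρ0 k)
      · obtain ⟨d, rfl⟩ : ∃ d, k = m + d := ⟨k - m, by omega⟩
        have h1 := hup_p d
        rw [div_mul_eq_mul_div, le_div_iff₀ (pow_pos hρpos m)]
        calc p (m + d) * ρ ^ m ≤ (p m * ρ ^ d) * ρ ^ m :=
              mul_le_mul_of_nonneg_right h1 (pow_nonneg hρ0 m)
          _ = p m * ρ ^ (m + d) := by rw [pow_add]; ring
    have hgeo : Summable (fun k : ℕ => (p m / ρ ^ m) * ρ ^ k) :=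
      (summable_geometric_of_lt_one hρ0 hρ1).mul_left _
    have hsum_le : (1 : ℝ) ≤ (p m / ρ ^ m) * (1 - ρ)⁻¹ := by
      calc (1:ℝ) = ∑' n, p n := htsump.symm
        _ ≤ ∑' n : ℕ, (p m / ρ ^ m) * ρ ^ n := Summable.tsum_le_tsum hA hSp hgeo
        _ = (p m / ρ ^ m) * ∑' n : ℕ, ρ ^ n := tsum_mul_left
        _ = (p m / ρ ^ m) * (1 - ρ)⁻¹ := by rw [tsum_geometric_of_lt_one hρ0 hρ1]
    have hAlb : 1 - ρ ≤ p m / ρ ^ m := by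
      have h1ρ : (0 : ℝ) < 1 - ρ := by linarith
      rw [← div_eq_mul_inv, le_div_iff₀ h1ρ, one_mul] at hsum_le
      exact hsum_le
    obtain ⟨k₀, hk₀⟩ := discrete_hinf_lemA ρ hρpos hρ1
    have hfinal : ((k₀ : ℝ) + 1) * ((1 - ρ) * ρ ^ k₀) ≤ Real.exp (-1) := by
      have e1 : ((k₀ : ℝ) + 1) * ((1 - ρ) * ρ ^ k₀) ≤ ((k₀ : ℝ) + 1) * ((p m / ρ ^ m) * ρ ^ k₀) :=
        mul_le_mul_of_nonneg_left (mul_le_mul_of_nonneg_right hAlb (pow_nonneg hρ0 _))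
          (by positivity)
      have hρmne : ρ ^ m ≠ 0 := (pow_pos hρpos m).ne'
      have e2 : ((k₀ : ℝ) + 1) * ((p m / ρ ^ m) * ρ ^ k₀) ≤ ((m : ℝ) + 1) * p m := by
        have h3 := mul_le_mul_of_nonneg_right (hL9 k₀)
          (div_nonneg (hp0 m) (pow_nonneg hρ0 m))
        have h4 : (((m : ℝ) + 1) * ρ ^ m) * (p m / ρ ^ m) = ((m : ℝ) + 1) * p m := by
          field_simp
        calc ((k₀ : ℝ) + 1) * ((p m / ρ ^ m) * ρ ^ k₀)
            = (((k₀ : ℝ) + 1) * ρ ^ k₀) * (p m / ρ ^ m) := by ring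
          _ ≤ (((m : ℝ) + 1) * ρ ^ m) * (p m / ρ ^ m) := h3
          _ = ((m : ℝ) + 1) * p m := h4
      exact e1.trans (e2.trans (hkey m))
    exact absurd hk₀ (not_lt.mpr hfinal)
  · -- degenerate case ρ = 0
    exfalso
    have hmz : (m : ℝ) / ((m : ℝ) + 1) ≤ 0 := hρzero ▸ le_max_right q ((m : ℝ) / ((m : ℝ) + 1))
    have hm0 : m = 0 := by
      by_contra hm
      have : (0 : ℝ) < (m : ℝ) / ((m : ℝ) + 1) := by
        apply div_pos
        · exact_mod_cast Nat.pos_of_ne_zero hm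
        · positivity
      linarith
    have hqz : q = 0 := le_antisymm (hρzero ▸ le_max_left q ((m : ℝ) / ((m : ℝ) + 1))) hq0
    have hp1 : p (m + 1) = 0 := by
      have := hqz
      rw [hq_def, div_eq_zero_iff] at this
      rcases this with h | h
      · exact h
      · exact absurd h hpm_pos.ne'
    rw [hm0] at hp1
    have hzero : ∀ n, n ≠ 0 → p n = 0 := by
      intro n hn
      have h1 : p n ≤ p 1 := hanti 1 n (by omega)
      exact le_antisymm (hp1 ▸ h1) (hp0 n)
    have hone : p 0 = 1 := by
      rw [← htsump, tsum_eq_single 0 hzero]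
    have h1le : (1 : ℝ) ≤ Real.exp (-1) := by simpa [hone] using hkey 0
    have hlt : Real.exp (-1) < Real.exp 0 := Real.exp_lt_exp.mpr (by norm_num)
    rw [Real.exp_zero] at hlt
    linarith
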